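/- For every integer k ≥ 1, the endomorphism algebra of the k-th tensor power of the standard representation of the infinite dicyclic group satisfies dim_ℂ End_{Dic∞}(V^{⊗k}) = (1/2)·binomial(2k,k). -/

import Mathlib

open scoped TensorProduct
open Matrix

noncomputable section

/-- `ℂ²`, the standard two-dimensional complex vector space. -/
abbrev V2 : Type := Fin 2 → ℂ

/-- The standard representation of a subgroup `G ≤ GL₂(ℂ)` on `ℂ²`, by matrix-vector
multiplication. -/
def stdRep (G : Subgroup (GL (Fin 2) ℂ)) : Representation ℂ G V2 where
  toFun g := Matrix.toLin' ((g : GL (Fin 2) ℂ) : Matrix (Fin 2) (Fin 2) ℂ)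
  map_one' := by
    simp only [OneMemClass.coe_one, Units.val_one, Matrix.toLin'_one]
    rfl
  map_mul' g h := by
    simp only [MulMemClass.coe_mul, Units.val_mul, Matrix.toLin'_mul]
    rfl

/-- `TPow j` is the `(j+1)`-st tensor power `V^{⊗(j+1)}` of `V = ℂ²`, realized as an
iterated binary tensor product (bundled as an object of `ModuleCat ℂ` so that the
recursion carries its module structure). -/
def TPow : ℕ → ModuleCat ℂ
  | 0 => ModuleCat.of ℂ V2
  | (j + 1) => ModuleCat.of ℂ (TPow j ⊗[ℂ] V2)

/-- The diagonal representation of `G ≤ GL₂(ℂ)` on `TPow j = V^{⊗(j+1)}`. -/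
def TPowRep (G : Subgroup (GL (Fin 2) ℂ)) : (j : ℕ) → Representation ℂ G (TPow j)
  | 0 => stdRep G
  | (j + 1) => (TPowRep G j).tprod (stdRep G)

/-- The basis vector `v_s^{⊗(j+1)}` of `TPow j = V^{⊗(j+1)}`, for `s : Fin 2`. -/
def vpow (s : Fin 2) : (j : ℕ) → TPow j
  | 0 => Pi.single s 1
  | (j + 1) => vpow s j ⊗ₜ[ℂ] Pi.single s 1

/-- The subspace `V_{j+1}` of `V^{⊗(j+1)}` spanned by `v₁^{⊗(j+1)}` and `v₂^{⊗(j+1)}`. -/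
def Vsub (j : ℕ) : Submodule ℂ (TPow j) := Submodule.span ℂ {vpow 0 j, vpow 1 j}

/-- The space `End_G(W)` of `G`-equivariant linear endomorphisms of a representation `W`. -/
def equivEnd {G W : Type*} [Group G] [AddCommGroup W] [Module ℂ W]
    (ρ : Representation ℂ G W) : Submodule ℂ (W →ₗ[ℂ] W) where
  carrier := {f | ∀ g : G, f ∘ₗ ρ g = ρ g ∘ₗ f}
  add_mem' := by
    intro f h hf hh g
    simp only [LinearMap.add_comp, LinearMap.comp_add, hf g, hh g]
  zero_mem' := by
    intro g
    simp only [LinearMap.zero_comp, LinearMap.comp_zero]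
  smul_mem' := by
    intro c f hf g
    simp only [LinearMap.smul_comp, LinearMap.comp_smul, hf g]

namespace DicAux

open Finset

def flip2 : Fin 2 → Fin 2 := ![1, 0]

lemma flip2_flip2 (s : Fin 2) : flip2 (flip2 s) = s := by fin_cases s <;> rfl

lemma flip2_eq_one_iff (s : Fin 2) : flip2 s = 1 ↔ ¬ s = 1 := by fin_cases s <;> simp [flip2]

def wt {α : Type*} [Fintype α] (S : α → Fin 2) : ℕ :=
  (Finset.univ.filter fun a => S a = 1).card

variable {α β : Type*} [Fintype α] [Fintype β]

lemma wt_add_wt_flip (S : α → Fin 2) : wt S + wt (fun a => flip2 (S a)) = Fintype.card α := by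
  have : (Finset.univ.filter fun a => flip2 (S a) = 1)
      = Finset.univ.filter fun a => ¬ S a = 1 := by
    apply Finset.filter_congr; intro a _; simp [flip2_eq_one_iff]
  rw [wt, wt, this, Finset.card_filter_add_card_filter_not, Finset.card_univ]

lemma wt_sum_elim (S : α → Fin 2) (T : β → Fin 2) : wt (Sum.elim S T) = wt S + wt T := by
  simp only [wt, ← Fintype.card_subtype]
  rw [Fintype.card_congr (Equiv.subtypeSum (p := fun x => Sum.elim S T x = 1)),
    Fintype.card_sum]
  exact congrArg₂ (· + ·) (Fintype.card_congr (Equiv.refl _)) (Fintype.card_congr (Equiv.refl _))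

/-- functions to `Fin 2` with weight `m` are counted by binomial coefficients. -/
lemma card_wt [DecidableEq α] (m : ℕ) :
    Fintype.card {S : α → Fin 2 // wt S = m} = (Fintype.card α).choose m := by
  rw [← Fintype.card_finset_len]
  apply Fintype.card_congr
  refine ⟨fun S => ⟨Finset.univ.filter fun a => S.1 a = 1, S.2⟩,
    fun s => ⟨fun a => if a ∈ s.1 then 1 else 0, ?_⟩, ?_, ?_⟩
  · rcases s with ⟨s, hs⟩
    subst hs
    simp only [wt]
    congr 1
    ext a
    by_cases h : a ∈ s <;> simp [h]
  · rintro ⟨S, hS⟩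
    ext a
    simp only [Finset.mem_filter, Finset.mem_univ, true_and]
    by_cases h : S a = 1
    · simp [h]
    · simp only [h, if_false]
      omega
  · rintro ⟨s, hs⟩
    ext a
    simp only [Finset.mem_filter, Finset.mem_univ, true_and]
    by_cases h : a ∈ s <;> simp [h]

lemma card_pairs (n : ℕ) :
    Fintype.card {p : (Fin n → Fin 2) × (Fin n → Fin 2) // wt p.1 = wt p.2}
      = (2 * n).choose n := by
  have e : {p : (Fin n → Fin 2) × (Fin n → Fin 2) // wt p.1 = wt p.2}
      ≃ {U : Fin n ⊕ Fin n → Fin 2 // wt U = n} := by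
    refine ⟨fun p => ⟨Sum.elim p.1.1 (fun i => flip2 (p.1.2 i)), ?_⟩,
      fun U => ⟨(fun i => U.1 (Sum.inl i), fun i => flip2 (U.1 (Sum.inr i))), ?_⟩, ?_, ?_⟩
    · rcases p with ⟨⟨S, T⟩, h⟩
      have h2 := wt_add_wt_flip T
      rw [wt_sum_elim]
      simp only at h ⊢
      rw [h]
      simpa [Fintype.card_fin] using h2
    · rcases U with ⟨U, hU⟩
      have h1 := wt_add_wt_flip (fun i => U (Sum.inl i))
      have h2 := wt_add_wt_flip (fun i => U (Sum.inr i))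
      have h3 : wt U = wt (fun i => U (Sum.inl i)) + wt (fun i => U (Sum.inr i)) := by
        rw [← wt_sum_elim]
        congr 1
        ext x
        cases x <;> rfl
      simp only [Fintype.card_fin] at h1 h2
      simp only
      omega
    · rintro ⟨⟨S, T⟩, h⟩
      exact Subtype.ext (Prod.ext rfl (funext fun i => flip2_flip2 _))
    · rintro ⟨U, hU⟩
      refine Subtype.ext (funext fun x => ?_)
      cases x
      · rfl
      · exact flip2_flip2 _
  rw [Fintype.card_congr e, card_wt]
  congr 1
  simp [Fintype.card_sum, two_mul]

lemma flip2_eq_zero_iff (s : Fin 2) : flip2 s = 0 ↔ ¬ s = 0 := by fin_cases s <;> simp [flip2]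

lemma wt_flip_eq_iff {m : ℕ} {S T : Fin (m + 1) → Fin 2} :
    wt (fun i => flip2 (S i)) = wt (fun i => flip2 (T i)) ↔ wt S = wt T := by
  have h1 := wt_add_wt_flip S
  have h2 := wt_add_wt_flip T
  omega

lemma two_mul_card_J (m : ℕ) :
    2 * Fintype.card {p : (Fin (m+1) → Fin 2) × (Fin (m+1) → Fin 2) //
        wt p.1 = wt p.2 ∧ p.1 0 = 0} = (2 * (m + 1)).choose (m + 1) := by
  classical
  have e : {p : (Fin (m+1) → Fin 2) × (Fin (m+1) → Fin 2) //
        (wt p.1 = wt p.2 ∧ p.1 0 = 0)}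
      ≃ {p : (Fin (m+1) → Fin 2) × (Fin (m+1) → Fin 2) //
        wt p.1 = wt p.2 ∧ ¬ p.1 0 = 0} := by
    refine ⟨fun p => ⟨((fun i => flip2 (p.1.1 i)), (fun i => flip2 (p.1.2 i))), ?_, ?_⟩,
      fun p => ⟨((fun i => flip2 (p.1.1 i)), (fun i => flip2 (p.1.2 i))), ?_, ?_⟩, ?_, ?_⟩
    · exact wt_flip_eq_iff.2 p.2.1
    · rw [flip2_eq_zero_iff]
      exact not_not_intro p.2.2
    · exact wt_flip_eq_iff.2 p.2.1
    · have := p.2.2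
      rw [flip2_eq_zero_iff]
      simpa using this
    · rintro ⟨⟨S, T⟩, h⟩
      exact Subtype.ext (Prod.ext (funext fun i => flip2_flip2 _) (funext fun i => flip2_flip2 _))
    · rintro ⟨⟨S, T⟩, h⟩
      exact Subtype.ext (Prod.ext (funext fun i => flip2_flip2 _) (funext fun i => flip2_flip2 _))
  rw [← card_pairs (m + 1)]
  rw [two_mul]
  nth_rewrite 2 [Fintype.card_congr e]
  rw [Fintype.card_subtype, Fintype.card_subtype, Fintype.card_subtype]
  rw [← Finset.filter_filter, ← Finset.filter_filter]
  exact Finset.card_filter_add_card_filter_not (p := fun x : (Fin (m+1) → Fin 2) × (Fin (m+1) → Fin 2) => x.1 0 = 0)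

def esign : Fin 2 → ℂ := ![1, -1]

lemma esign_mul_flip (s : Fin 2) : esign s * esign (flip2 s) = -1 := by
  fin_cases s <;> norm_num [esign, flip2]

def eps {m : ℕ} (S : Fin (m+1) → Fin 2) : ℂ := ∏ i, esign (S i)

lemma eps_mul_eps_flip {m : ℕ} (S : Fin (m+1) → Fin 2) :
    eps S * eps (fun i => flip2 (S i)) = (-1) ^ (m+1) := by
  rw [eps, eps, ← Finset.prod_mul_distrib]
  simp_rw [esign_mul_flip]
  rw [Finset.prod_const, Finset.card_univ, Fintype.card_fin]

lemma eps4 {m : ℕ} (S T : Fin (m+1) → Fin 2) :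
    (eps (fun i => flip2 (S i)) * eps (fun i => flip2 (T i))) * (eps S * eps T) = 1 := by
  have hS := eps_mul_eps_flip S
  have hT := eps_mul_eps_flip T
  have : (eps S * eps (fun i => flip2 (S i))) * (eps T * eps (fun i => flip2 (T i)))
      = (-1 : ℂ) ^ (m+1) * (-1) ^ (m+1) := by rw [hS, hT]
  calc (eps (fun i => flip2 (S i)) * eps (fun i => flip2 (T i))) * (eps S * eps T)
      = (eps S * eps (fun i => flip2 (S i))) * (eps T * eps (fun i => flip2 (T i))) := by ring
    _ = (-1 : ℂ) ^ (m+1) * (-1) ^ (m+1) := this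
    _ = 1 := by rw [← pow_add]; exact Even.neg_one_pow ⟨m + 1, rfl⟩

/-- The concrete solution space of the two commutation equations, as a space of matrices. -/
noncomputable def SolM (m : ℕ) : Submodule ℂ
    (Matrix (Fin (m+1) → Fin 2) (Fin (m+1) → Fin 2) ℂ) where
  carrier := {M | (∀ S T, wt S ≠ wt T → M S T = 0) ∧
    (∀ S T, M (fun i => flip2 (S i)) (fun i => flip2 (T i))
      = eps (fun i => flip2 (S i)) * eps (fun i => flip2 (T i)) * M S T)}
  add_mem' := by
    rintro M N ⟨hM1, hM2⟩ ⟨hN1, hN2⟩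
    constructor
    · intro S T h
      simp [Matrix.add_apply, hM1 S T h, hN1 S T h]
    · intro S T
      simp only [Matrix.add_apply, hM2 S T, hN2 S T]
      ring
  zero_mem' := by
    constructor <;> intro S T <;> simp
  smul_mem' := by
    rintro c M ⟨hM1, hM2⟩
    constructor
    · intro S T h
      simp [Matrix.smul_apply, hM1 S T h]
    · intro S T
      simp only [Matrix.smul_apply, hM2 S T, smul_eq_mul]
      ring

/-- Restriction of a solution matrix to representative index pairs is a linear equivalence. -/
noncomputable def solEquiv (m : ℕ) : SolM m ≃ₗ[ℂ]
    ({p : (Fin (m+1) → Fin 2) × (Fin (m+1) → Fin 2) //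
        wt p.1 = wt p.2 ∧ p.1 0 = 0} → ℂ) := by
  classical
  refine LinearEquiv.ofBijective
    { toFun := fun M p => M.1 p.1.1 p.1.2
      map_add' := fun M N => rfl
      map_smul' := fun c M => rfl } ⟨?_, ?_⟩
  · -- injective
    rintro ⟨M, hM1, hM2⟩ ⟨N, hN1, hN2⟩ h
    simp only [LinearMap.coe_mk, AddHom.coe_mk] at h
    apply Subtype.ext
    ext S T
    show M S T = N S T
    by_cases hw : wt S = wt T
    · by_cases h0 : S 0 = 0
      · exact congrFun h ⟨(S, T), hw, h0⟩
    -- case S 0 ≠ 0 : use the flip relation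
      · have hσσS : (fun i => flip2 ((fun i => flip2 (S i)) i)) = S := funext fun i => flip2_flip2 _
        have hσσT : (fun i => flip2 ((fun i => flip2 (T i)) i)) = T := funext fun i => flip2_flip2 _
        have hwσ : wt (fun i => flip2 (S i)) = wt (fun i => flip2 (T i)) := wt_flip_eq_iff.2 hw
        have h0σ : (fun i => flip2 (S i)) 0 = 0 := (flip2_eq_zero_iff _).2 h0
        have key : M (fun i => flip2 (S i)) (fun i => flip2 (T i))
            = N (fun i => flip2 (S i)) (fun i => flip2 (T i)) :=
          congrFun h ⟨((fun i => flip2 (S i)), (fun i => flip2 (T i))), hwσ, h0σ⟩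
        have eM := hM2 (fun i => flip2 (S i)) (fun i => flip2 (T i))
        have eN := hN2 (fun i => flip2 (S i)) (fun i => flip2 (T i))
        rw [hσσS, hσσT] at eM eN
        rw [eM, eN, key]
    · rw [hM1 S T hw, hN1 S T hw]
  · -- surjective
    intro f
    set F : ((Fin (m+1) → Fin 2) × (Fin (m+1) → Fin 2)) → ℂ :=
      fun p => if h : wt p.1 = wt p.2 ∧ p.1 0 = 0 then f ⟨p, h⟩ else 0 with hF
    set M : Matrix (Fin (m+1) → Fin 2) (Fin (m+1) → Fin 2) ℂ :=
      fun S T => if wt S = wt T then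
        (if S 0 = 0 then F (S, T)
         else eps S * eps T * F ((fun i => flip2 (S i)), (fun i => flip2 (T i)))) else 0 with hMdef
    have hmem : M ∈ SolM m := by
      constructor
      · intro S T h
        simp only [hMdef, if_neg h]
      · intro S T
        have hσσS : (fun i => flip2 ((fun i => flip2 (S i)) i)) = S := funext fun i => flip2_flip2 _
        have hσσT : (fun i => flip2 ((fun i => flip2 (T i)) i)) = T := funext fun i => flip2_flip2 _
        by_cases hw : wt S = wt T
        · have hwσ : wt (fun i => flip2 (S i)) = wt (fun i => flip2 (T i)) := wt_flip_eq_iff.2 hw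
          by_cases h0 : S 0 = 0
          · have h0σ : ¬ (fun i => flip2 (S i)) 0 = 0 := by
              rw [flip2_eq_zero_iff]
              exact not_not_intro h0
            simp only [hMdef, if_pos hw, if_pos hwσ, if_pos h0, if_neg h0σ, flip2_flip2]
          · have h0σ : (fun i => flip2 (S i)) 0 = 0 := (flip2_eq_zero_iff _).2 h0
            simp only [hMdef, if_pos hw, if_pos hwσ, if_neg h0, if_pos h0σ]
            linear_combination
              (-F ((fun i => flip2 (S i)), fun i => flip2 (T i))) * eps4 S T
        · have hwσ : ¬ wt (fun i => flip2 (S i)) = wt (fun i => flip2 (T i)) := by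
            rw [wt_flip_eq_iff]
            exact hw
          simp only [hMdef, if_neg hw, if_neg hwσ, mul_zero]
    refine ⟨⟨M, hmem⟩, ?_⟩
    funext p
    rcases p with ⟨⟨S, T⟩, hw, h0⟩
    simp only [LinearMap.coe_mk, AddHom.coe_mk, hMdef, if_pos hw, if_pos h0, hF]
    show M S T = f ⟨(S, T), ⟨hw, h0⟩⟩
    simp only [hMdef, if_pos hw, if_pos h0, hF, dif_pos (⟨hw, h0⟩ : wt S = wt T ∧ S 0 = 0)]

lemma two_mul_finrank_SolM (m : ℕ) :
    2 * Module.finrank ℂ (SolM m) = (2 * (m + 1)).choose (m + 1) := by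
  rw [LinearEquiv.finrank_eq (solEquiv m), Module.finrank_pi, two_mul_card_J]


/-- append a last coordinate -/
def snocE (n : ℕ) : ((Fin n → Fin 2) × Fin 2) ≃ (Fin (n + 1) → Fin 2) where
  toFun p := Fin.snoc p.1 p.2
  invFun S := (Fin.init S, S (Fin.last n))
  left_inv p := by simp
  right_inv S := by simp

/-- The standard basis of `TPow j`, indexed by words in `Fin 2`. -/
def tb : (j : ℕ) → Module.Basis (Fin (j + 1) → Fin 2) ℂ (TPow j)
  | 0 => (Pi.basisFun ℂ (Fin 2)).reindex (Equiv.funUnique (Fin 1) (Fin 2)).symm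
  | (j + 1) => (((tb j).tensorProduct (Pi.basisFun ℂ (Fin 2))).reindex (snocE (j + 1)))

lemma tb_zero_apply (S : Fin 1 → Fin 2) : tb 0 S = Pi.single (S 0) (1 : ℂ) := by
  erw [tb, Module.Basis.reindex_apply]
  simp [Equiv.funUnique]
  rfl

lemma tb_succ_apply (j : ℕ) (S : Fin (j + 2) → Fin 2) :
    tb (j + 1) S = tb j (Fin.init S) ⊗ₜ[ℂ] Pi.single (S (Fin.last (j + 1))) (1 : ℂ) := by
  erw [tb, Module.Basis.reindex_apply, Module.Basis.tensorProduct_apply']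
  congr 1
  simp [Pi.basisFun_apply, snocE]

/-- Action of a "monomial" group element on the basis of the tensor power. -/
lemma tpow_action (G : Subgroup (GL (Fin 2) ℂ)) (g : G) (u : Fin 2 → ℂ) (p : Fin 2 → Fin 2)
    (h : ∀ s : Fin 2, stdRep G g (Pi.single s 1) = u s • (Pi.single (p s) 1 : V2)) :
    ∀ (j : ℕ) (S : Fin (j + 1) → Fin 2),
      TPowRep G j g (tb j S) = (∏ i, u (S i)) • tb j (fun i => p (S i)) := by
  intro j
  induction j with
  | zero =>
    intro S
    rw [tb_zero_apply, tb_zero_apply]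
    rw [show TPowRep G 0 = stdRep G from rfl]
    erw [h (S 0)]
    rw [show (∏ i : Fin 1, u (S i)) = u (S 0) from by simp]
    rfl
  | succ j ih =>
    intro S
    rw [tb_succ_apply, tb_succ_apply]
    rw [show TPowRep G (j + 1) = (TPowRep G j).tprod (stdRep G) from rfl]
    erw [Representation.tprod_apply, TensorProduct.map_tmul]
    rw [ih (Fin.init S), h (S (Fin.last (j + 1)))]
    rw [TensorProduct.tmul_smul, ← TensorProduct.smul_tmul', smul_smul]
    congr 1
    · rw [Fin.prod_univ_castSucc (f := fun i : Fin (j + 1 + 1) => u (S i)), mul_comm]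
      rfl


/-- action of the diagonal generator on basis vectors of `ℂ²`. -/
lemma stdA_single (θ : ℝ) (G : Subgroup (GL (Fin 2) ℂ)) (gA : G)
    (hA : ((gA : GL (Fin 2) ℂ) : Matrix (Fin 2) (Fin 2) ℂ) =
      !![Complex.exp (θ * Complex.I), 0; 0, Complex.exp (-(θ * Complex.I))]) (s : Fin 2) :
    stdRep G gA (Pi.single s 1) =
      ![Complex.exp (θ * Complex.I), Complex.exp (-(θ * Complex.I))] s •
        (Pi.single s 1 : V2) := by
  show Matrix.toLin' ((gA : GL (Fin 2) ℂ) : Matrix (Fin 2) (Fin 2) ℂ) (Pi.single s 1) = _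
  rw [hA, Matrix.toLin'_apply, Matrix.mulVec_single]
  funext i
  fin_cases s <;> fin_cases i <;>
    simp [Pi.single_apply]

/-- action of the antidiagonal generator on basis vectors of `ℂ²`. -/
lemma stdX_single (G : Subgroup (GL (Fin 2) ℂ)) (gX : G)
    (hX : ((gX : GL (Fin 2) ℂ) : Matrix (Fin 2) (Fin 2) ℂ) = !![0, -1; 1, 0]) (s : Fin 2) :
    stdRep G gX (Pi.single s 1) = esign s • (Pi.single (flip2 s) 1 : V2) := by
  show Matrix.toLin' ((gX : GL (Fin 2) ℂ) : Matrix (Fin 2) (Fin 2) ℂ) (Pi.single s 1) = _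
  rw [hX, Matrix.toLin'_apply, Matrix.mulVec_single]
  funext i
  fin_cases s <;> fin_cases i <;>
    simp [Pi.single_apply, esign, flip2]

/-- commuting with the generators is enough. -/
lemma comm_of_gen {Γ : Type*} [Group Γ] {W : Type*} [AddCommGroup W] [Module ℂ W]
    (S : Set Γ) (G : Subgroup Γ) (hG : G = Subgroup.closure S)
    (ρ : Representation ℂ G W) (f : W →ₗ[ℂ] W)
    (h : ∀ g : G, (g : Γ) ∈ S → f ∘ₗ ρ g = ρ g ∘ₗ f) :
    ∀ g : G, f ∘ₗ ρ g = ρ g ∘ₗ f := by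
  have hmain : ∀ g : G, ∀ (a : G), f ∘ₗ ρ a = ρ a ∘ₗ f → True := fun _ _ _ => trivial
  let K : Subgroup G :=
    { carrier := {x : G | f ∘ₗ ρ x = ρ x ∘ₗ f}
      one_mem' := by
        show f ∘ₗ ρ 1 = ρ 1 ∘ₗ f
        rw [_root_.map_one]
        rfl
      mul_mem' := by
        intro a b ha hb
        show f ∘ₗ ρ (a * b) = ρ (a * b) ∘ₗ f
        rw [_root_.map_mul, Module.End.mul_eq_comp, ← LinearMap.comp_assoc, ha,
          LinearMap.comp_assoc, hb, ← LinearMap.comp_assoc]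
      inv_mem' := by
        intro a ha
        show f ∘ₗ ρ a⁻¹ = ρ a⁻¹ ∘ₗ f
        have ha' : f ∘ₗ ρ a = ρ a ∘ₗ f := ha
        have h1 : ρ a⁻¹ ∘ₗ ρ a = LinearMap.id := by
          rw [← Module.End.mul_eq_comp, ← _root_.map_mul, inv_mul_cancel, _root_.map_one]
          rfl
        have h2 : ρ a ∘ₗ ρ a⁻¹ = LinearMap.id := by
          rw [← Module.End.mul_eq_comp, ← _root_.map_mul, mul_inv_cancel, _root_.map_one]
          rfl
        have e1 : (ρ a⁻¹ ∘ₗ ρ a) ∘ₗ (f ∘ₗ ρ a⁻¹) = f ∘ₗ ρ a⁻¹ := by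
          rw [h1, LinearMap.id_comp]
        rw [← e1]
        simp only [LinearMap.comp_assoc]
        congr 1
        rw [← LinearMap.comp_assoc, ← ha', LinearMap.comp_assoc, h2, LinearMap.comp_id] }
  intro g
  have hsub : S ⊆ ↑(K.map G.subtype) := by
    intro x hx
    have hxG : x ∈ G := by rw [hG]; exact Subgroup.subset_closure hx
    exact Subgroup.mem_map.2 ⟨⟨x, hxG⟩, h ⟨x, hxG⟩ hx, rfl⟩
  have hle : Subgroup.closure S ≤ K.map G.subtype := (Subgroup.closure_le _).2 hsub
  have hg : (g : Γ) ∈ K.map G.subtype := hle (by rw [← hG]; exact g.2)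
  obtain ⟨y, hy, hyx⟩ := Subgroup.mem_map.1 hg
  have : y = g := Subtype.ext hyx
  rw [← this]
  exact hy

/-- membership in the equivariant endomorphisms is equivalent to commuting with the
two generators. -/
lemma mem_equivEnd_iff {W : Type*} [AddCommGroup W] [Module ℂ W]
    (X A : GL (Fin 2) ℂ) (G : Subgroup (GL (Fin 2) ℂ)) (hG : G = Subgroup.closure {X, A})
    (gX gA : G) (hgX : (gX : GL (Fin 2) ℂ) = X) (hgA : (gA : GL (Fin 2) ℂ) = A)
    (ρ : Representation ℂ G W) (f : W →ₗ[ℂ] W) :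
    f ∈ equivEnd ρ ↔ (f ∘ₗ ρ gX = ρ gX ∘ₗ f ∧ f ∘ₗ ρ gA = ρ gA ∘ₗ f) := by
  constructor
  · intro hf
    exact ⟨hf gX, hf gA⟩
  · rintro ⟨h1, h2⟩
    intro g
    refine comm_of_gen {X, A} G hG ρ f ?_ g
    intro a ha
    rcases ha with ha | ha
    · have : a = gX := Subtype.ext (by rw [hgX]; exact ha)
      rw [this]; exact h1
    · have : a = gA := Subtype.ext (by rw [hgA]; exact ha)
      rw [this]; exact h2


/-- the diagonal eigenvalue attached to a word -/
noncomputable def dval (θ : ℝ) {m : ℕ} (S : Fin (m+1) → Fin 2) : ℂ :=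
  ∏ i, ![Complex.exp (θ * Complex.I), Complex.exp (-(θ * Complex.I))] (S i)

lemma dval_eq (θ : ℝ) {m : ℕ} (S : Fin (m+1) → Fin 2) :
    dval θ S = Complex.exp ((((m+1 : ℕ) : ℂ) - 2 * (wt S : ℂ)) * (θ * Complex.I)) := by
  have h1 : ∀ s : Fin 2, ![Complex.exp (θ * Complex.I), Complex.exp (-(θ * Complex.I))] s
      = Complex.exp (if s = 1 then -(θ * Complex.I) else θ * Complex.I) := by
    intro s; fin_cases s <;> simp
  rw [dval]
  simp_rw [h1]
  rw [← Complex.exp_sum, Finset.sum_ite, Finset.sum_const, Finset.sum_const]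
  congr 1
  have hcard : ((Finset.univ.filter fun i => ¬ S i = 1).card : ℤ)
      = (m + 1) - ((Finset.univ.filter fun i => S i = 1).card : ℤ) := by
    have := Finset.card_filter_add_card_filter_not
      (s := (Finset.univ : Finset (Fin (m+1)))) (p := fun i => S i = 1)
    simp only [Finset.card_univ, Fintype.card_fin] at this
    omega
  rw [nsmul_eq_mul, nsmul_eq_mul, wt]
  have : ((Finset.univ.filter fun i => ¬ S i = 1).card : ℂ)
      = ((m + 1 : ℕ) : ℂ) - ((Finset.univ.filter fun i => S i = 1).card : ℂ) := by
    exact_mod_cast congrArg (fun z : ℤ => (z : ℂ)) hcard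
  rw [this]
  ring

lemma dval_inj (θ : ℝ) (hθ : Irrational (θ / Real.pi)) {m : ℕ}
    (S T : Fin (m+1) → Fin 2) : dval θ S = dval θ T ↔ wt S = wt T := by
  constructor
  · intro h
    rw [dval_eq, dval_eq, Complex.exp_eq_exp_iff_exists_int] at h
    obtain ⟨nz, hn⟩ := h
    by_contra hne
    have key : ((2 * (wt T : ℤ) - 2 * (wt S : ℤ) : ℤ) : ℂ) * θ = ((nz : ℂ) * (2 * Real.pi)) := by
      have hI : ((((m+1 : ℕ) : ℂ) - 2 * (wt S : ℂ)) * (θ * Complex.I)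
          - (((m+1 : ℕ) : ℂ) - 2 * (wt T : ℂ)) * (θ * Complex.I))
          = ((2 * (wt T : ℤ) - 2 * (wt S : ℤ) : ℤ) : ℂ) * θ * Complex.I := by
        push_cast
        ring
      have h2 : ((2 * (wt T : ℤ) - 2 * (wt S : ℤ) : ℤ) : ℂ) * θ * Complex.I
          = (nz : ℂ) * (2 * Real.pi) * Complex.I := by
        rw [← hI, hn]
        push_cast
        ring
      exact mul_right_cancel₀ Complex.I_ne_zero h2
    -- take real parts
    have hreal : ((2 * (wt T : ℤ) - 2 * (wt S : ℤ) : ℤ) : ℝ) * θ = (nz : ℝ) * (2 * Real.pi) := by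
      have := congrArg Complex.re key
      simpa [Complex.ofReal_mul] using this
    set c : ℤ := 2 * (wt T : ℤ) - 2 * (wt S : ℤ) with hc
    have hc0 : c ≠ 0 := by omega
    have : θ / Real.pi = (2 * nz : ℝ) / (c : ℝ) := by
      have hπ := Real.pi_ne_zero
      have hcr : (c : ℝ) ≠ 0 := Int.cast_ne_zero.2 hc0
      field_simp
      linarith [hreal]
    have : θ / Real.pi = ((2 * nz / c : ℚ) : ℝ) := by
      rw [this]
      push_cast
      ring
    exact (hθ ⟨(2 * nz / c : ℚ), this.symm⟩)
  · intro h
    rw [dval_eq, dval_eq, h]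


lemma eps_sq {m : ℕ} (S : Fin (m+1) → Fin 2) : eps S * eps S = 1 := by
  rw [eps, ← Finset.prod_mul_distrib]
  have : ∀ s : Fin 2, esign s * esign s = 1 := by intro s; fin_cases s <;> norm_num [esign]
  simp_rw [this]
  simp

lemma sflip_sflip {m : ℕ} (S : Fin (m+1) → Fin 2) :
    (fun i => flip2 (flip2 (S i))) = S := funext fun i => flip2_flip2 _

/-- the matrix of the `X`-generator in the word basis -/
noncomputable def MXmat (m : ℕ) : Matrix (Fin (m+1) → Fin 2) (Fin (m+1) → Fin 2) ℂ :=
  Matrix.of fun S T => if S = (fun i => flip2 (T i)) then eps T else 0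

lemma commA_iff (θ : ℝ) (hθ : Irrational (θ / Real.pi)) {m : ℕ}
    (M : Matrix (Fin (m+1) → Fin 2) (Fin (m+1) → Fin 2) ℂ) :
    M * Matrix.diagonal (dval θ (m := m)) = Matrix.diagonal (dval θ (m := m)) * M
      ↔ ∀ S T, wt S ≠ wt T → M S T = 0 := by
  constructor
  · intro h S T hw
    have h1 := congrFun (congrFun h S) T
    rw [Matrix.mul_diagonal, Matrix.diagonal_mul] at h1
    have hd : dval θ S ≠ dval θ T := fun hc => hw ((dval_inj θ hθ S T).1 hc)
    have : M S T * (dval θ T - dval θ S) = 0 := by ring_nf; linear_combination h1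
    rcases mul_eq_zero.1 this with h' | h'
    · exact h'
    · exact absurd (by linear_combination h' : dval θ T = dval θ S) (Ne.symm hd)
  · intro h
    ext S T
    rw [Matrix.mul_diagonal, Matrix.diagonal_mul]
    by_cases hw : wt S = wt T
    · rw [(dval_inj θ hθ S T).2 hw]
      ring
    · rw [h S T hw]
      ring

lemma commX_iff {m : ℕ} (M : Matrix (Fin (m+1) → Fin 2) (Fin (m+1) → Fin 2) ℂ) :
    M * MXmat m = MXmat m * M ↔
      ∀ S T, M (fun i => flip2 (S i)) (fun i => flip2 (T i))
        = eps (fun i => flip2 (S i)) * eps (fun i => flip2 (T i)) * M S T := by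
  have hL : ∀ S T, (M * MXmat m) S T = M S (fun i => flip2 (T i)) * eps T := by
    intro S T
    rw [Matrix.mul_apply]
    rw [Finset.sum_eq_single (fun i => flip2 (T i))]
    · rw [MXmat]; simp
    · intro U _ hU
      rw [MXmat]
      simp only [Matrix.of_apply]
      rw [if_neg hU, mul_zero]
    · intro hmem
      exact absurd (Finset.mem_univ _) hmem
  have hR : ∀ S T, (MXmat m * M) S T = eps (fun i => flip2 (S i)) * M (fun i => flip2 (S i)) T := by
    intro S T
    rw [Matrix.mul_apply]
    rw [Finset.sum_eq_single (fun i => flip2 (S i))]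
    · rw [MXmat]
      simp only [Matrix.of_apply]
      rw [if_pos]
      funext i
      rw [flip2_flip2]
    · intro U _ hU
      rw [MXmat]
      simp only [Matrix.of_apply]
      rw [if_neg, zero_mul]
      intro hc
      apply hU
      funext i
      have := congrFun hc i
      rw [this, flip2_flip2]
    · intro hmem
      exact absurd (Finset.mem_univ _) hmem
  constructor
  · intro h S T
    have hr := by
      have h1 := congrFun (congrFun h S) (fun i => flip2 (T i))
      rwa [hL, hR] at h1
    simp only [sflip_sflip] at hr
    linear_combination (-(eps (fun i => flip2 (S i)))) * hr
      - (M (fun i => flip2 (S i)) (fun i => flip2 (T i))) * eps_sq (fun i => flip2 (S i))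
  · intro q
    ext S T
    rw [hL, hR]
    have hq := q S (fun i => flip2 (T i))
    simp only [sflip_sflip] at hq
    rw [hq]
    linear_combination (-(eps T * M S (fun i => flip2 (T i)))) * eps_sq (fun i => flip2 (S i))


lemma toMatrixA (θ : ℝ) (G : Subgroup (GL (Fin 2) ℂ)) (gA : G)
    (hA : ((gA : GL (Fin 2) ℂ) : Matrix (Fin 2) (Fin 2) ℂ) =
      !![Complex.exp (θ * Complex.I), 0; 0, Complex.exp (-(θ * Complex.I))]) (m : ℕ) :
    LinearMap.toMatrix (tb m) (tb m) (TPowRep G m gA) = Matrix.diagonal (dval θ (m := m)) := by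
  ext S T
  rw [LinearMap.toMatrix_apply]
  rw [tpow_action G gA (![Complex.exp (θ * Complex.I), Complex.exp (-(θ * Complex.I))])
    (fun s => s) (fun s => stdA_single θ G gA hA s) m T]
  rw [_root_.map_smul]
  rw [Module.Basis.repr_self]
  rw [show (∏ i, ![Complex.exp (θ * Complex.I), Complex.exp (-(θ * Complex.I))] (T i))
      = dval θ T from rfl]
  simp only [Finsupp.smul_single, smul_eq_mul, mul_one, Finsupp.single_apply,
    Matrix.diagonal_apply]
  by_cases h : S = T
  · subst h; simp
  · rw [if_neg (fun hc => h hc.symm), if_neg h]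

lemma toMatrixX (G : Subgroup (GL (Fin 2) ℂ)) (gX : G)
    (hX : ((gX : GL (Fin 2) ℂ) : Matrix (Fin 2) (Fin 2) ℂ) = !![0, -1; 1, 0]) (m : ℕ) :
    LinearMap.toMatrix (tb m) (tb m) (TPowRep G m gX) = MXmat m := by
  ext S T
  rw [LinearMap.toMatrix_apply]
  rw [tpow_action G gX esign flip2 (fun s => stdX_single G gX hX s) m T]
  rw [_root_.map_smul, Module.Basis.repr_self]
  rw [show (∏ i, esign (T i)) = eps T from rfl]
  simp only [Finsupp.smul_single, smul_eq_mul, mul_one, Finsupp.single_apply, MXmat,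
    Matrix.of_apply]
  by_cases h : S = (fun i => flip2 (T i))
  · rw [if_pos h.symm, if_pos h]
  · rw [if_neg (fun hc => h hc.symm), if_neg h]

lemma two_mul_finrank (θ : ℝ) (hθ : Irrational (θ / Real.pi)) (X A : GL (Fin 2) ℂ)
    (hX : (X : Matrix (Fin 2) (Fin 2) ℂ) = !![0, -1; 1, 0])
    (hA : (A : Matrix (Fin 2) (Fin 2) ℂ) =
      !![Complex.exp (θ * Complex.I), 0; 0, Complex.exp (-(θ * Complex.I))])
    (G : Subgroup (GL (Fin 2) ℂ)) (hG : G = Subgroup.closure {X, A}) (m : ℕ) :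
    2 * Module.finrank ℂ (equivEnd (TPowRep G m)) = (2 * (m + 1)).choose (m + 1) := by
  classical
  have hXG : X ∈ G := by rw [hG]; exact Subgroup.subset_closure (Or.inl rfl)
  have hAG : A ∈ G := by rw [hG]; exact Subgroup.subset_closure (Or.inr rfl)
  set gX : G := ⟨X, hXG⟩ with hgX
  set gA : G := ⟨A, hAG⟩ with hgA
  set E := LinearMap.toMatrix (tb m) (tb m) with hE
  have hcomm : ∀ (f L : TPow m →ₗ[ℂ] TPow m),
      (f ∘ₗ L = L ∘ₗ f ↔ E f * E L = E L * E f) := by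
    intro f L
    constructor
    · intro hfl
      rw [hE, ← LinearMap.toMatrix_comp _ (tb m), ← LinearMap.toMatrix_comp _ (tb m), hfl]
    · intro hm
      apply (LinearMap.toMatrix (tb m) (tb m)).injective
      rw [LinearMap.toMatrix_comp _ (tb m), LinearMap.toMatrix_comp _ (tb m)]
      exact hm
  have hmap : Submodule.map (E : (TPow m →ₗ[ℂ] TPow m) →ₗ[ℂ] _) (equivEnd (TPowRep G m))
      = SolM m := by
    ext M
    rw [Submodule.mem_map_equiv]
    rw [mem_equivEnd_iff X A G hG gX gA rfl rfl (TPowRep G m) (E.symm M)]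
    rw [hcomm, hcomm]
    rw [hE, LinearEquiv.apply_symm_apply]
    rw [toMatrixX G gX hX m, toMatrixA θ G gA hA m]
    rw [commX_iff, commA_iff θ hθ]
    constructor
    · rintro ⟨h1, h2⟩
      exact ⟨h2, h1⟩
    · rintro ⟨h1, h2⟩
      exact ⟨h2, h1⟩
  have hfr : Module.finrank ℂ (equivEnd (TPowRep G m)) = Module.finrank ℂ (SolM m) := by
    rw [← hmap]
    exact (LinearEquiv.finrank_map_eq E (equivEnd (TPowRep G m))).symm
  rw [hfr, two_mul_finrank_SolM]

end DicAux

/-- For every integer `k ≥ 1`, the endomorphism algebra of the `k`-th tensor power of the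
standard representation of the infinite dicyclic group satisfies
`dim_ℂ End_{Dic∞}(V^{⊗k}) = (1/2)·binomial(2k,k)`. -/
theorem dim_equivEnd_tensorPower_dicyclicInf
    (θ : ℝ) (hθ : Irrational (θ / Real.pi)) (X A : GL (Fin 2) ℂ)
    (hX : (X : Matrix (Fin 2) (Fin 2) ℂ) = !![0, -1; 1, 0])
    (hA : (A : Matrix (Fin 2) (Fin 2) ℂ) =
      !![Complex.exp (θ * Complex.I), 0; 0, Complex.exp (-(θ * Complex.I))])
    (G : Subgroup (GL (Fin 2) ℂ)) (hG : G = Subgroup.closure {X, A})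
    (k : ℕ) (hk : 1 ≤ k) :
    (Module.finrank ℂ (equivEnd (TPowRep G (k - 1))) : ℚ) =
      (Nat.choose (2 * k) k : ℚ) / 2 := by
  obtain ⟨m, rfl⟩ : ∃ m, k = m + 1 := ⟨k - 1, by omega⟩
  have h := DicAux.two_mul_finrank θ hθ X A hX hA G hG m
  have hk1 : m + 1 - 1 = m := rfl
  rw [hk1]
  have := congrArg (fun n : ℕ => (n : ℚ)) h
  push_cast at this
  linarith
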